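/- Marginal-contribution prices under decreasing marginal returns (Corollary 3.2): Let ι be a nonempty finite type and U : Finset ι → ℝ a set function satisfying decreasing marginal returns. Define p : ι → ℝ by p i = U(univ) − U(univ \ {i}). Then for every i ∈ ι and every finset S ⊆ univ \ {i}, U(univ \ {i}) ≥ U(S) + Σ_{j ∈ univ \ S, j ≠ i} p j; consequently p solves the price system for U, i.e., for every i, p i = min over all finsets S ⊆ univ \ {i} of (U(univ) − U(S) − Σ_{j ∈ univ \ S, j ≠ i} p j). -/

import Mathlib

open Finset

/-- A price vector `p` solves the price system for the set function `U` if for every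
firm `i`, `p i` equals the minimum over all finsets `S ⊆ univ \ {i}` of
`U univ − U S − Σ_{j ∈ univ \ S, j ≠ i} p j`. -/
def SolvesPriceSystem {ι : Type*} [Fintype ι] [DecidableEq ι]
    (U : Finset ι → ℝ) (p : ι → ℝ) : Prop :=
  ∀ i : ι,
    IsLeast
      ((fun S : Finset ι => U univ - U S - ∑ j ∈ (univ \ S).erase i, p j) ''
        {S : Finset ι | S ⊆ univ \ {i}})
      (p i)

/-- A set function `U` satisfies decreasing marginal returns if for all finsets
`S ⊆ T` and every `j ∈ S`, `U S − U (S \ {j}) ≥ U T − U (T \ {j})`. -/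
def DecreasingMarginalReturns {ι : Type*} [DecidableEq ι] (U : Finset ι → ℝ) : Prop :=
  ∀ S T : Finset ι, S ⊆ T → ∀ j ∈ S, U T - U (T.erase j) ≤ U S - U (S.erase j)

lemma key_telescope {ι : Type*} [Fintype ι] [DecidableEq ι]
    (U : Finset ι → ℝ) (hU : DecreasingMarginalReturns U) :
    ∀ D S : Finset ι, Disjoint S D →
      U S + ∑ j ∈ D, (U univ - U (univ \ {j})) ≤ U (S ∪ D) := by
  intro D
  induction D using Finset.induction_on with
  | empty => intro S _; simp
  | insert _ _ ha ih =>
    rename_i a D'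
    intro S hdisj
    have haS : a ∉ S := by
      intro h
      exact (Finset.disjoint_left.mp hdisj h) (mem_insert_self a D')
    have hSD' : Disjoint S D' := hdisj.mono_right (Finset.subset_insert a D')
    have h1 : U univ - U (univ \ {a}) ≤ U (insert a S) - U S := by
      have := hU (insert a S) univ (Finset.subset_univ _) a (mem_insert_self a S)
      rwa [Finset.erase_insert haS, Finset.erase_eq] at this
    have h2 : U (insert a S) + ∑ j ∈ D', (U univ - U (univ \ {j})) ≤ U (insert a S ∪ D') := by
      apply ih
      rw [Finset.disjoint_left]
      intro x hx
      rcases Finset.mem_insert.mp hx with h | h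
      · subst h; exact ha
      · exact Finset.disjoint_left.mp hSD' h
    rw [Finset.sum_insert ha]
    have : S ∪ insert a D' = insert a S ∪ D' := by
      rw [Finset.union_insert, Finset.insert_union]
    rw [this]
    linarith

theorem marginal_contribution_prices
    {ι : Type*} [Fintype ι] [DecidableEq ι] [Nonempty ι]
    (U : Finset ι → ℝ) (hU : DecreasingMarginalReturns U)
    (p : ι → ℝ) (hp : ∀ i : ι, p i = U univ - U (univ \ {i})) :
    (∀ i : ι, ∀ S : Finset ι, S ⊆ univ \ {i} →
      U S + ∑ j ∈ (univ \ S).erase i, p j ≤ U (univ \ {i}))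
    ∧ SolvesPriceSystem U p := by
  have main : ∀ i : ι, ∀ S : Finset ι, S ⊆ univ \ {i} →
      U S + ∑ j ∈ (univ \ S).erase i, p j ≤ U (univ \ {i}) := by
    intro i S hS
    have hDeq : (univ \ S).erase i = (univ.erase i) \ S := by
      ext j
      simp only [Finset.mem_erase, Finset.mem_sdiff, Finset.mem_univ, true_and]
      tauto
    have hSsub : S ⊆ univ.erase i := by rwa [Finset.erase_eq]
    have hdisj : Disjoint S (univ.erase i \ S) := Finset.disjoint_sdiff
    have hkey := key_telescope U hU (univ.erase i \ S) S hdisj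
    rw [Finset.union_sdiff_of_subset hSsub] at hkey
    rw [hDeq]
    calc U S + ∑ j ∈ univ.erase i \ S, p j
        = U S + ∑ j ∈ univ.erase i \ S, (U univ - U (univ \ {j})) := by
          congr 1; exact Finset.sum_congr rfl (fun j _ => hp j)
      _ ≤ U (univ.erase i) := hkey
      _ = U (univ \ {i}) := by rw [Finset.erase_eq]
  refine ⟨main, ?_⟩
  intro i
  constructor
  · refine ⟨univ \ {i}, by simp, ?_⟩
    have : (univ \ (univ \ {i})).erase i = (∅ : Finset ι) := by
      ext j
      simp only [Finset.mem_erase, Finset.mem_sdiff, Finset.mem_univ, true_and,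
        Finset.mem_singleton, Finset.notMem_empty, iff_false]
      tauto
    have h2 : univ \ (univ \ {i}) = ({i} : Finset ι) := by ext j; simp
    simp only [this, Finset.sum_empty, hp i, h2, sub_zero]
    simp
  · rintro x ⟨S, hS, rfl⟩
    have := main i S hS
    rw [hp i]
    simp only
    linarith
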